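/- Let p ≥ 1, let (X, Σ, ν) be a measure space, let V be a real vector space, and let Λ : V × ℝ → L^p(ν) be a linear map. Then there exists a linear map ξ : V → ℝ such that for all v ∈ V and all w ∈ ℝ, ∫_X |Λ(v, ξ(v))|^p dν ≤ (1 + 2^p) · ∫_X |Λ(v, w)|^p dν. In particular, ∫_X |Λ(v, ξ(v))|^p dν ≤ (1 + 2^p) · inf_{w ∈ ℝ} ∫_X |Λ(v, w)|^p dν. -/

import Mathlib

open MeasureTheory

private lemma integral_abs_rpow_eq_norm_rpow {X : Type*} [MeasurableSpace X] (ν : Measure X)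
    {p : ℝ} (hp : 1 ≤ p) (f : Lp ℝ (ENNReal.ofReal p) ν) :
    ∫ x, |f x| ^ p ∂ν = ‖f‖ ^ p := by
  have hp0 : 0 < p := lt_of_lt_of_le one_pos hp
  have hq0 : (ENNReal.ofReal p) ≠ 0 := by
    simp [ENNReal.ofReal_eq_zero, not_le, hp0]
  have hqt : (ENNReal.ofReal p) ≠ ⊤ := ENNReal.ofReal_ne_top
  have hpt : (ENNReal.ofReal p).toReal = p := ENNReal.toReal_ofReal hp0.le
  have h := (Lp.memLp f).eLpNorm_eq_integral_rpow_norm hq0 hqt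
  rw [hpt] at h
  have hInt : 0 ≤ ∫ x, ‖f x‖ ^ p ∂ν :=
    integral_nonneg fun x => Real.rpow_nonneg (norm_nonneg _) _
  have hnorm : ‖f‖ = (∫ x, ‖f x‖ ^ p ∂ν) ^ p⁻¹ := by
    rw [Lp.norm_def, h, ENNReal.toReal_ofReal (Real.rpow_nonneg hInt _)]
  rw [hnorm, Real.rpow_inv_rpow hInt hp0.ne']
  simp only [Real.norm_eq_abs]

theorem stmt0 {X : Type*} [MeasurableSpace X] (ν : Measure X) (p : ℝ) (hp : 1 ≤ p)
    (V : Type*) [AddCommGroup V] [Module ℝ V]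
    (Λ : (V × ℝ) →ₗ[ℝ] Lp ℝ (ENNReal.ofReal p) ν) :
    ∃ ξ : V →ₗ[ℝ] ℝ,
      (∀ v : V, ∀ w : ℝ,
          ∫ x, |(Λ (v, ξ v)) x| ^ p ∂ν ≤ (1 + 2 ^ p) * ∫ x, |(Λ (v, w)) x| ^ p ∂ν) ∧
      (∀ v : V,
          ∫ x, |(Λ (v, ξ v)) x| ^ p ∂ν ≤
            (1 + 2 ^ p) * ⨅ w : ℝ, ∫ x, |(Λ (v, w)) x| ^ p ∂ν) := by
  have hp0 : 0 < p := lt_of_lt_of_le one_pos hp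
  haveI : Fact (1 ≤ ENNReal.ofReal p) := ⟨by
    simpa using ENNReal.ofReal_le_ofReal hp⟩
  set a : Lp ℝ (ENNReal.ofReal p) ν := Λ (0, 1) with ha_def
  have hdecomp : ∀ (v : V) (w : ℝ), Λ (v, w) = Λ (v, 0) + w • a := by
    intro v w
    have : ((v, w) : V × ℝ) = (v, 0) + w • ((0 : V), (1 : ℝ)) := by
      simp [Prod.ext_iff]
    rw [this, map_add, _root_.map_smul]
  have hc1 : (1 : ℝ) ≤ 1 + 2 ^ p := by
    have : (0 : ℝ) < 2 ^ p := Real.rpow_pos_of_pos two_pos p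
    linarith
  have hcpos : (0 : ℝ) < 1 + 2 ^ p := lt_of_lt_of_le one_pos hc1
  have hnonneg : ∀ g : Lp ℝ (ENNReal.ofReal p) ν, 0 ≤ ∫ x, |g x| ^ p ∂ν :=
    fun g => integral_nonneg fun x => Real.rpow_nonneg (abs_nonneg _) _
  -- main construction, split on whether a = 0
  by_cases ha : a = 0
  · refine ⟨0, ?_, ?_⟩ <;> intro v
    · intro w
      have heq : Λ (v, w) = Λ (v, (0 : V →ₗ[ℝ] ℝ) v) := by
        simp [hdecomp v w, ha]
      rw [heq]
      nlinarith [hnonneg (Λ (v, (0 : V →ₗ[ℝ] ℝ) v))]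
    · have heq : ∀ w : ℝ, ∫ x, |(Λ (v, w)) x| ^ p ∂ν
          = ∫ x, |(Λ (v, (0 : V →ₗ[ℝ] ℝ) v)) x| ^ p ∂ν := by
        intro w
        have : Λ (v, w) = Λ (v, (0 : V →ₗ[ℝ] ℝ) v) := by simp [hdecomp v w, ha]
        rw [this]
      have hconst : (⨅ w : ℝ, ∫ x, |(Λ (v, w)) x| ^ p ∂ν)
          = ∫ x, |(Λ (v, (0 : V →ₗ[ℝ] ℝ) v)) x| ^ p ∂ν := by
        simp only [heq]; exact ciInf_const
      rw [hconst]
      nlinarith [hnonneg (Λ (v, (0 : V →ₗ[ℝ] ℝ) v))]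
  · obtain ⟨φ, hφ1, hφa⟩ := exists_dual_vector ℝ a (norm_ne_zero_iff.mpr ha)
    have hanorm : (0 : ℝ) < ‖a‖ := norm_pos_iff.mpr ha
    set ξ : V →ₗ[ℝ] ℝ :=
      (-‖a‖⁻¹) • (φ.toLinearMap ∘ₗ Λ ∘ₗ LinearMap.inl ℝ V ℝ) with hξ_def
    have hξv : ∀ v : V, ξ v = -‖a‖⁻¹ * φ (Λ (v, 0)) := by
      intro v; simp [hξ_def]
    have key : ∀ (v : V) (w : ℝ), ‖Λ (v, ξ v)‖ ≤ 2 * ‖Λ (v, w)‖ := by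
      intro v w
      set u := Λ (v, ξ v) with hu_def
      set g := Λ (v, w) with hg_def
      have hu : u = Λ (v, 0) + (ξ v) • a := hdecomp v (ξ v)
      have hg : g = Λ (v, 0) + w • a := hdecomp v w
      have hφu : φ u = 0 := by
        rw [hu, map_add, _root_.map_smul, hφa, hξv v]
        simp only [smul_eq_mul]
        field_simp
        simp
      have hug : u - g = (ξ v - w) • a := by
        rw [hu, hg, sub_smul]; abel
      have h1 : |ξ v - w| * ‖a‖ = |φ g| := by
        have : φ (u - g) = (ξ v - w) * ‖a‖ := by
          rw [hug, _root_.map_smul, hφa]; rfl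
        have h2 : φ (u - g) = -φ g := by rw [map_sub, hφu]; ring
        have := h2 ▸ this
        calc |ξ v - w| * ‖a‖ = |(ξ v - w) * ‖a‖| := by
              rw [abs_mul, abs_of_nonneg hanorm.le]
          _ = |φ g| := by rw [← this, abs_neg]
      have h3 : |φ g| ≤ ‖g‖ := by
        calc |φ g| = ‖φ g‖ := (Real.norm_eq_abs _).symm
          _ ≤ ‖φ‖ * ‖g‖ := φ.le_opNorm g
          _ = ‖g‖ := by rw [hφ1, one_mul]
      calc ‖u‖ = ‖g + (u - g)‖ := by rw [show g + (u - g) = u by abel]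
        _ ≤ ‖g‖ + ‖u - g‖ := norm_add_le _ _
        _ = ‖g‖ + |ξ v - w| * ‖a‖ := by
            rw [hug, norm_smul, Real.norm_eq_abs]
        _ ≤ ‖g‖ + ‖g‖ := by linarith [h1 ▸ h3]
        _ = 2 * ‖g‖ := by ring
    have main : ∀ (v : V) (w : ℝ),
        ∫ x, |(Λ (v, ξ v)) x| ^ p ∂ν ≤ (1 + 2 ^ p) * ∫ x, |(Λ (v, w)) x| ^ p ∂ν := by
      intro v w
      rw [integral_abs_rpow_eq_norm_rpow ν hp, integral_abs_rpow_eq_norm_rpow ν hp]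
      calc ‖Λ (v, ξ v)‖ ^ p ≤ (2 * ‖Λ (v, w)‖) ^ p :=
            Real.rpow_le_rpow (norm_nonneg _) (key v w) hp0.le
        _ = 2 ^ p * ‖Λ (v, w)‖ ^ p := Real.mul_rpow (by norm_num) (norm_nonneg _)
        _ ≤ (1 + 2 ^ p) * ‖Λ (v, w)‖ ^ p := by
            nlinarith [Real.rpow_nonneg (norm_nonneg (Λ (v, w))) p]
    refine ⟨ξ, main, fun v => ?_⟩
    have h4 : (∫ x, |(Λ (v, ξ v)) x| ^ p ∂ν) / (1 + 2 ^ p)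
        ≤ ⨅ w : ℝ, ∫ x, |(Λ (v, w)) x| ^ p ∂ν :=
      le_ciInf fun w => (div_le_iff₀ hcpos).mpr (by rw [mul_comm]; exact main v w)
    calc ∫ x, |(Λ (v, ξ v)) x| ^ p ∂ν
        = (1 + 2 ^ p) * ((∫ x, |(Λ (v, ξ v)) x| ^ p ∂ν) / (1 + 2 ^ p)) := by
          field_simp
      _ ≤ (1 + 2 ^ p) * ⨅ w : ℝ, ∫ x, |(Λ (v, w)) x| ^ p ∂ν := by
          exact mul_le_mul_of_nonneg_left h4 hcpos.le
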